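/- Let h₁, h₂ > 0, H = h₁ + h₂, S ∈ (0,1), A₄ = 3(1−S), B₁ < 0, B₂ = h₁/H − B₁, and α₁ = −(A₄B₂/3)(B₁ + B₂)². Then A₄B₁/(4α₁) > 0; moreover, setting γ = √(A₄B₁/(4α₁)) and λ = H/γ, one has (λ/h₁)² = (4/3)·(1 + h₁/(H·|B₁|)). -/

import Mathlib

theorem stmt18 (h₁ h₂ H S A₄ B₁ B₂ α₁ γ lam : ℝ)
    (hh₁ : 0 < h₁) (hh₂ : 0 < h₂) (hH : H = h₁ + h₂)
    (hS : 0 < S) (hS1 : S < 1) (hA₄ : A₄ = 3 * (1 - S))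
    (hB₁ : B₁ < 0) (hB₂ : B₂ = h₁ / H - B₁)
    (hα₁ : α₁ = -(A₄ * B₂ / 3) * (B₁ + B₂) ^ 2)
    (hγ : γ = Real.sqrt (A₄ * B₁ / (4 * α₁))) (hlam : lam = H / γ) :
    0 < A₄ * B₁ / (4 * α₁) ∧
    (lam / h₁) ^ 2 = (4 / 3) * (1 + h₁ / (H * |B₁|)) := by
  have hHpos : 0 < H := by rw [hH]; linarith
  have hA₄pos : 0 < A₄ := by rw [hA₄]; linarith
  have hB₂pos : 0 < B₂ := by
    rw [hB₂]
    have : 0 < h₁ / H := div_pos hh₁ hHpos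
    linarith
  have hsum : B₁ + B₂ = h₁ / H := by rw [hB₂]; ring
  have hα₁neg : α₁ < 0 := by
    rw [hα₁, hsum]
    have h1 : 0 < A₄ * B₂ / 3 := by positivity
    have h2 : 0 < (h₁ / H) ^ 2 := by positivity
    nlinarith
  have hnum : A₄ * B₁ < 0 := mul_neg_of_pos_of_neg hA₄pos hB₁
  have hpos : 0 < A₄ * B₁ / (4 * α₁) :=
    div_pos_of_neg_of_neg hnum (by linarith)
  refine ⟨hpos, ?_⟩
  have hγsq : γ ^ 2 = A₄ * B₁ / (4 * α₁) := by
    rw [hγ, Real.sq_sqrt hpos.le]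
  have hγpos : 0 < γ := by
    rw [hγ]; exact Real.sqrt_pos.mpr hpos
  have habs : |B₁| = -B₁ := abs_of_neg hB₁
  rw [hlam, habs]
  have hα₁ne : α₁ ≠ 0 := ne_of_lt hα₁neg
  have hγne : γ ≠ 0 := ne_of_gt hγpos
  have hB₁ne : B₁ ≠ 0 := ne_of_lt hB₁
  -- from hγsq: γ^2 * (4*α₁) = A₄*B₁, with α₁ expressed
  have key : γ ^ 2 * (4 * α₁) = A₄ * B₁ := by
    rw [hγsq]; field_simp
  rw [hα₁, hsum] at key
  have hA₄ne : A₄ ≠ 0 := ne_of_gt hA₄pos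
  have hHne : H ≠ 0 := hHpos.ne'
  have keyc : γ ^ 2 * 4 * B₂ * h₁ ^ 2 = -3 * B₁ * H ^ 2 := by
    apply mul_left_cancel₀ hA₄ne
    field_simp at key ⊢
    linarith [key]
  have hHB₂ : H * B₂ = h₁ - H * B₁ := by
    rw [hB₂]; field_simp
  field_simp
  nlinarith [keyc, hHB₂, congrArg (· * H) keyc, congrArg (· * (4 * γ ^ 2 * h₁ ^ 2)) hHB₂]
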